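/- Let c = (√5−1)/2 and let Z* be the real symmetric 7×7 matrix (indexed 0,1,…,6) with Z*_{00} = √5; Z*_{0i} = −1 for i = 1,…,6; Z*_{ii} = 1 for i = 1,…,6; off-diagonal entries Z*_{13} = Z*_{14} = Z*_{16} = Z*_{24} = Z*_{25} = Z*_{26} = Z*_{35} = c, Z*_{46} = 1; and Z*_{ij} = 0 for the remaining pairs of distinct i, j ∈ {1,…,6}, namely {1,2},{1,5},{2,3},{3,4},{3,6},{4,5},{5,6}. Then Z* is positive semidefinite, Z*_{ii} = −(2 Z*_{0i} + 1) for all i ∈ {1,…,6}, and Z*_{ij} = 0 for every pair of distinct vertices i, j not adjacent in G₆; hence Z* is dual feasible for the Lovász theta SDP of G₆ with objective value Z*_{00} = √5. -/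

import Mathlib

/-- Adjacency in the graph `G₆` on the vertex set `{1, …, 6}` with edge set
`{ {1,3}, {1,4}, {1,6}, {2,4}, {2,5}, {2,6}, {3,5}, {4,6} }`. -/
def g6Adj (i j : ℕ) : Prop :=
  (i, j) ∈ [(1, 3), (1, 4), (1, 6), (2, 4), (2, 5), (2, 6), (3, 5), (4, 6)] ∨
    (j, i) ∈ [(1, 3), (1, 4), (1, 6), (2, 4), (2, 5), (2, 6), (3, 5), (4, 6)]

/-- The explicit dual optimal solution `Z*` of the Lovász theta SDP of `G₆`, with
`c = (√5 - 1)/2`. -/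
noncomputable def g6Zstar : Matrix (Fin 7) (Fin 7) ℝ :=
  let c : ℝ := (Real.sqrt 5 - 1) / 2
  !![Real.sqrt 5, -1, -1, -1, -1, -1, -1;
     -1, 1, 0, c, c, 0, c;
     -1, 0, 1, 0, c, c, c;
     -1, c, 0, 1, 0, c, 0;
     -1, c, c, 0, 1, 0, 1;
     -1, 0, c, c, 0, 1, 0;
     -1, c, c, 0, 1, 0, 1]

/-- `Z*` is positive semidefinite, satisfies `Z* i i = -(2 Z* 0 i + 1)` for `i ∈ {1, …, 6}`,
and `Z* i j = 0` for every pair of distinct vertices not adjacent in `G₆`; hence `Z*` is dual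
feasible for the Lovász theta SDP of `G₆` with objective value `Z* 0 0 = √5`. -/
theorem g6Zstar_dual_feasible :
    g6Zstar.PosSemidef ∧
    (∀ i : Fin 7, i.val ≠ 0 → g6Zstar i i = -(2 * g6Zstar 0 i + 1)) ∧
    (∀ i j : Fin 7, i.val ≠ 0 → j.val ≠ 0 → i ≠ j → ¬g6Adj i.val j.val → g6Zstar i j = 0) ∧
    g6Zstar 0 0 = Real.sqrt 5 := by
  refine ⟨?_, ?_, ?_, rfl⟩
  · rw [Matrix.posSemidef_iff_dotProduct_mulVec]
    constructor
    · ext i j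
      rw [Matrix.conjTranspose_apply, star_trivial]
      fin_cases i <;> fin_cases j <;> rfl
    · intro x
      have hs : Real.sqrt 5 ^ 2 = 5 := Real.sq_sqrt (by norm_num)
      have h0 : (0:ℝ) ≤ Real.sqrt 5 := Real.sqrt_nonneg 5
      have h3 : Real.sqrt 5 ≤ 3 := by nlinarith [hs, h0]
      have key : dotProduct (star x) (g6Zstar.mulVec x) =
          (Real.sqrt 5) * (x 0 - (Real.sqrt 5)/5 * (x 1 + x 2 + x 3 + x 4 + x 5 + x 6)) ^ 2
          + (1 - (Real.sqrt 5)/5) * (x 1 + (-1-(Real.sqrt 5))/4 * x 2 + (-1+(Real.sqrt 5))/4 * x 3 + (-1+(Real.sqrt 5))/4 * x 4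
              + (-1-(Real.sqrt 5))/4 * x 5 + (-1+(Real.sqrt 5))/4 * x 6) ^ 2
          + (3 - (Real.sqrt 5))/4 * (x 2 + (-1-(Real.sqrt 5))/2 * x 3 + (1+(Real.sqrt 5))/2 * x 4 - x 5 + (1+(Real.sqrt 5))/2 * x 6) ^ 2 := by
        simp only [dotProduct, Matrix.mulVec, Fin.sum_univ_seven, Pi.star_apply,
          star_trivial]
        have e00 : g6Zstar 0 0 = Real.sqrt 5 := rfl
        have e01 : g6Zstar 0 1 = (-1:ℝ) := rfl
        have e02 : g6Zstar 0 2 = (-1:ℝ) := rfl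
        have e03 : g6Zstar 0 3 = (-1:ℝ) := rfl
        have e04 : g6Zstar 0 4 = (-1:ℝ) := rfl
        have e05 : g6Zstar 0 5 = (-1:ℝ) := rfl
        have e06 : g6Zstar 0 6 = (-1:ℝ) := rfl
        have e10 : g6Zstar 1 0 = (-1:ℝ) := rfl
        have e11 : g6Zstar 1 1 = (1:ℝ) := rfl
        have e12 : g6Zstar 1 2 = (0:ℝ) := rfl
        have e13 : g6Zstar 1 3 = ((Real.sqrt 5 - 1)/2) := rfl
        have e14 : g6Zstar 1 4 = ((Real.sqrt 5 - 1)/2) := rfl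
        have e15 : g6Zstar 1 5 = (0:ℝ) := rfl
        have e16 : g6Zstar 1 6 = ((Real.sqrt 5 - 1)/2) := rfl
        have e20 : g6Zstar 2 0 = (-1:ℝ) := rfl
        have e21 : g6Zstar 2 1 = (0:ℝ) := rfl
        have e22 : g6Zstar 2 2 = (1:ℝ) := rfl
        have e23 : g6Zstar 2 3 = (0:ℝ) := rfl
        have e24 : g6Zstar 2 4 = ((Real.sqrt 5 - 1)/2) := rfl
        have e25 : g6Zstar 2 5 = ((Real.sqrt 5 - 1)/2) := rfl
        have e26 : g6Zstar 2 6 = ((Real.sqrt 5 - 1)/2) := rfl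
        have e30 : g6Zstar 3 0 = (-1:ℝ) := rfl
        have e31 : g6Zstar 3 1 = ((Real.sqrt 5 - 1)/2) := rfl
        have e32 : g6Zstar 3 2 = (0:ℝ) := rfl
        have e33 : g6Zstar 3 3 = (1:ℝ) := rfl
        have e34 : g6Zstar 3 4 = (0:ℝ) := rfl
        have e35 : g6Zstar 3 5 = ((Real.sqrt 5 - 1)/2) := rfl
        have e36 : g6Zstar 3 6 = (0:ℝ) := rfl
        have e40 : g6Zstar 4 0 = (-1:ℝ) := rfl
        have e41 : g6Zstar 4 1 = ((Real.sqrt 5 - 1)/2) := rfl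
        have e42 : g6Zstar 4 2 = ((Real.sqrt 5 - 1)/2) := rfl
        have e43 : g6Zstar 4 3 = (0:ℝ) := rfl
        have e44 : g6Zstar 4 4 = (1:ℝ) := rfl
        have e45 : g6Zstar 4 5 = (0:ℝ) := rfl
        have e46 : g6Zstar 4 6 = (1:ℝ) := rfl
        have e50 : g6Zstar 5 0 = (-1:ℝ) := rfl
        have e51 : g6Zstar 5 1 = (0:ℝ) := rfl
        have e52 : g6Zstar 5 2 = ((Real.sqrt 5 - 1)/2) := rfl
        have e53 : g6Zstar 5 3 = ((Real.sqrt 5 - 1)/2) := rfl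
        have e54 : g6Zstar 5 4 = (0:ℝ) := rfl
        have e55 : g6Zstar 5 5 = (1:ℝ) := rfl
        have e56 : g6Zstar 5 6 = (0:ℝ) := rfl
        have e60 : g6Zstar 6 0 = (-1:ℝ) := rfl
        have e61 : g6Zstar 6 1 = ((Real.sqrt 5 - 1)/2) := rfl
        have e62 : g6Zstar 6 2 = ((Real.sqrt 5 - 1)/2) := rfl
        have e63 : g6Zstar 6 3 = (0:ℝ) := rfl
        have e64 : g6Zstar 6 4 = (1:ℝ) := rfl
        have e65 : g6Zstar 6 5 = (0:ℝ) := rfl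
        have e66 : g6Zstar 6 6 = (1:ℝ) := rfl
        simp only [e00, e01, e02, e03, e04, e05, e06, e10, e11, e12, e13, e14, e15, e16, e20, e21, e22, e23, e24, e25, e26, e30, e31, e32, e33, e34, e35, e36, e40, e41, e42, e43, e44, e45, e46, e50, e51, e52, e53, e54, e55, e56, e60, e61, e62, e63, e64, e65, e66]
        linear_combination ((-3/20:ℝ) * x 6 * x 6 + (7/200:ℝ) * x 6 * x 6 * (Real.sqrt 5) + (-1/8:ℝ) * x 5 * x 6 + (-21/200:ℝ) * x 5 * x 6 * (Real.sqrt 5) + (-3/80:ℝ) * x 5 * x 5 + (-11/400:ℝ) * x 5 * x 5 * (Real.sqrt 5) + (-3/10:ℝ) * x 4 * x 6 + (7/100:ℝ) * x 4 * x 6 * (Real.sqrt 5) + (-1/8:ℝ) * x 4 * x 5 + (-21/200:ℝ) * x 4 * x 5 * (Real.sqrt 5) + (-3/20:ℝ) * x 4 * x 4 + (7/200:ℝ) * x 4 * x 4 * (Real.sqrt 5) + (-1/20:ℝ) * x 3 * x 6 + (-9/50:ℝ) * x 3 * x 6 * (Real.sqrt 5) + (3/8:ℝ) * x 3 * x 5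 + (-21/200:ℝ) * x 3 * x 5 * (Real.sqrt 5) + (-1/20:ℝ) * x 3 * x 4 + (-9/50:ℝ) * x 3 * x 4 * (Real.sqrt 5) + (-3/20:ℝ) * x 3 * x 3 + (7/200:ℝ) * x 3 * x 3 * (Real.sqrt 5) + (3/8:ℝ) * x 2 * x 6 + (-21/200:ℝ) * x 2 * x 6 * (Real.sqrt 5) + (-3/40:ℝ) * x 2 * x 5 + (-11/200:ℝ) * x 2 * x 5 * (Real.sqrt 5) + (3/8:ℝ) * x 2 * x 4 + (-21/200:ℝ) * x 2 * x 4 * (Real.sqrt 5) + (-1/8:ℝ) * x 2 * x 3 + (-21/200:ℝ) * x 2 * x 3 * (Real.sqrt 5) + (-3/80:ℝ) * x 2 * x 2 + (-11/400:ℝ) * x 2 * x 2 * (Real.sqrt 5) + (1/10:ℝ) * x 1 * x 6 + (-2/25:ℝ) * x 1 * x 6 * (Real.sqrt 5) + (-1/10:ℝ) * x 1 * x 5 + (-2/25:ℝ) * x 1 * x 5 * (Real.sqrt 5) + (1/10:ℝ) * x 1 * x 4 + (-2/25:ℝ) * x 1 * x 4 * (Real.sqrt 5) + (1/10:ℝ)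 * x 1 * x 3 + (-2/25:ℝ) * x 1 * x 3 * (Real.sqrt 5) + (-1/10:ℝ) * x 1 * x 2 + (-2/25:ℝ) * x 1 * x 2 * (Real.sqrt 5) + (-1/25:ℝ) * x 1 * x 1 * (Real.sqrt 5) + (2/5:ℝ) * x 0 * x 6 + (2/5:ℝ) * x 0 * x 5 + (2/5:ℝ) * x 0 * x 4 + (2/5:ℝ) * x 0 * x 3 + (2/5:ℝ) * x 0 * x 2 + (2/5:ℝ) * x 0 * x 1) * hs
      rw [key]
      have e1 : (0:ℝ) ≤ 1 - Real.sqrt 5/5 := by linarith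
      have e2 : (0:ℝ) ≤ (3 - Real.sqrt 5)/4 := by linarith
      exact add_nonneg (add_nonneg (mul_nonneg h0 (sq_nonneg _))
        (mul_nonneg e1 (sq_nonneg _))) (mul_nonneg e2 (sq_nonneg _))
  · intro i hi
    fin_cases i <;>
      first
        | exact absurd rfl hi
        | exact show (1:ℝ) = -(2 * (-1:ℝ) + 1) by norm_num
  · intro i j hi hj hij hadj
    fin_cases i <;> fin_cases j <;> simp_all [g6Adj] <;> rfl
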